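/- Let G be a finite abelian group, S ⊆ G finite, and A a coset of an index-2 subgroup H of G not containing 0, with S ⊆ H. In the distinct link graph L*_S[A] (vertices A, with x ≠ y adjacent iff {x,y,s} is a distinct Schur triple for some s ∈ S), every vertex x satisfies: the number of neighbors y with x − y ∈ (S ∪ −S) \ {0} is exactly |(S ∪ −S) \ {0}|, and the number of remaining neighbors y with x + y ∈ S is at most |S|. Consequently |(S ∪ −S) \ {0}| ≤ δ(Γ) ≤ Δ(Γ) ≤ |(S ∪ −S) \ {0}| + |S|. -/

import Mathlib

def linkGraph {G : Type*} [AddCommGroup G] (B S : Set G) : SimpleGraph B where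
  Adj x y := x ≠ y ∧ ∃ s ∈ S, (x : G) ≠ s ∧ (y : G) ≠ s ∧
    ((x : G) + y = s ∨ (x : G) + s = y ∨ (y : G) + s = x)
  symm := by
    refine ⟨?_⟩
    rintro x y ⟨hxy, s, hs, hxs, hys, h⟩
    refine ⟨hxy.symm, s, hs, hys, hxs, ?_⟩
    rcases h with h | h | h
    · exact Or.inl (by rw [add_comm]; exact h)
    · exact Or.inr (Or.inr h)
    · exact Or.inr (Or.inl h)
  loopless := by refine ⟨?_⟩; rintro x ⟨h, -⟩; exact h rfl

theorem stmt17 (G : Type*) [AddCommGroup G] [Finite G] (H : AddSubgroup G)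
    (hH : H.index = 2) (S : Set G) (hS : S ⊆ (H : Set G)) :
    ∀ x : ({x : G | x ∉ H} : Set G),
      {y : ({x : G | x ∉ H} : Set G) | (linkGraph {x : G | x ∉ H} S).Adj x y ∧
          (x : G) - y ∈ (S ∪ -S) \ {0}}.ncard = ((S ∪ -S) \ {0}).ncard ∧
      {y : ({x : G | x ∉ H} : Set G) | (linkGraph {x : G | x ∉ H} S).Adj x y ∧
          (x : G) - y ∉ (S ∪ -S) \ {0}}.ncard ≤ S.ncard ∧
      ((S ∪ -S) \ {0}).ncard ≤
        {y : ({x : G | x ∉ H} : Set G) | (linkGraph {x : G | x ∉ H} S).Adj x y}.ncard ∧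
      {y : ({x : G | x ∉ H} : Set G) | (linkGraph {x : G | x ∉ H} S).Adj x y}.ncard ≤
        ((S ∪ -S) \ {0}).ncard + S.ncard := by
  intro x
  have hxH : (x : G) ∉ H := x.2
  have hDH : ∀ d ∈ (S ∪ -S) \ {0}, d ∈ H := by
    rintro d ⟨hd | hd, -⟩
    · exact hS hd
    · exact neg_neg d ▸ H.neg_mem (hS (Set.mem_neg.mp hd))
  -- key image equality for type-1 neighbours
  have key : Subtype.val '' {y : ({x : G | x ∉ H} : Set G) |
        (linkGraph {x : G | x ∉ H} S).Adj x y ∧ (x : G) - y ∈ (S ∪ -S) \ {0}}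
      = (fun d => (x : G) - d) '' ((S ∪ -S) \ {0}) := by
    ext g
    constructor
    · rintro ⟨y, ⟨-, hy⟩, rfl⟩
      exact ⟨(x : G) - y, hy, sub_sub_cancel _ _⟩
    · rintro ⟨d, hd, rfl⟩
      have hdH := hDH d hd
      have hgA : (x : G) - d ∈ {x : G | x ∉ H} := by
        intro hc
        exact hxH (by simpa using H.add_mem hc hdH)
      have hd0 : d ≠ 0 := fun h => hd.2 (by simp [h])
      refine ⟨⟨(x : G) - d, hgA⟩, ⟨⟨?_, ?_⟩, by simpa using hd⟩, rfl⟩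
      · intro h
        have h' : (x : G) - d = (x : G) := (congrArg Subtype.val h).symm
        exact hd0 (sub_eq_self.mp h')
      · rcases hd.1 with hdS | hdS
        · refine ⟨d, hdS, fun h => hxH (h ▸ hdH), fun h => ?_,
            Or.inr (Or.inr (sub_add_cancel _ _))⟩
          have h' : (x : G) = d + d := sub_eq_iff_eq_add.mp h
          exact hxH (h' ▸ H.add_mem hdH hdH)
        · have hnS : -d ∈ S := Set.mem_neg.mp hdS
          have hnH : -d ∈ H := hS hnS
          refine ⟨-d, hnS, fun h => hxH (h ▸ hnH), fun h => ?_,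
            Or.inr (Or.inl (sub_eq_add_neg _ _).symm)⟩
          have h' : (x : G) = 0 := by rw [sub_eq_iff_eq_add] at h; simpa using h
          exact hxH (h' ▸ H.zero_mem)
  have hinj : Function.Injective (fun d => (x : G) - d) := fun a b h => by
    simpa using sub_right_injective h
  have h1 : {y : ({x : G | x ∉ H} : Set G) | (linkGraph {x : G | x ∉ H} S).Adj x y ∧
      (x : G) - y ∈ (S ∪ -S) \ {0}}.ncard = ((S ∪ -S) \ {0}).ncard := by
    rw [← Set.ncard_image_of_injective _ Subtype.val_injective, key,
      Set.ncard_image_of_injective _ hinj]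
  -- type-2 neighbours inject into S
  have hsub : (fun g => (x : G) + g) '' (Subtype.val ''
      {y : ({x : G | x ∉ H} : Set G) | (linkGraph {x : G | x ∉ H} S).Adj x y ∧
        (x : G) - y ∉ (S ∪ -S) \ {0}}) ⊆ S := by
    rintro - ⟨-, ⟨y, ⟨⟨hne, s, hsS, hxs, hys, heq⟩, hnot⟩, rfl⟩, rfl⟩
    rcases heq with h | h | h
    · show (x : G) + (y : G) ∈ S; rwa [h]
    · exfalso
      apply hnot
      have hs0 : s ≠ 0 := by
        intro h0; apply hne; apply Subtype.val_injective; rw [← h, h0, add_zero]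
      have hxy : (x : G) - y = -s := by
        rw [← h, sub_add_eq_sub_sub, sub_self, zero_sub]
      rw [hxy]
      exact ⟨Or.inr (Set.mem_neg.mpr (by simpa using hsS)), by simpa using hs0⟩
    · exfalso
      apply hnot
      have hs0 : s ≠ 0 := by
        intro h0; apply hne; apply Subtype.val_injective; rw [← h, h0, add_zero]
      have hxy : (x : G) - y = s := (eq_sub_of_add_eq (add_comm (y : G) s ▸ h)).symm
      rw [hxy]
      exact ⟨Or.inl hsS, hs0⟩
  have h2 : {y : ({x : G | x ∉ H} : Set G) | (linkGraph {x : G | x ∉ H} S).Adj x y ∧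
      (x : G) - y ∉ (S ∪ -S) \ {0}}.ncard ≤ S.ncard := by
    rw [← Set.ncard_image_of_injective _ Subtype.val_injective,
      ← Set.ncard_image_of_injective _ (add_right_injective (x : G))]
    exact Set.ncard_le_ncard hsub S.toFinite
  -- decomposition of the neighbourhood
  have hN : {y : ({x : G | x ∉ H} : Set G) | (linkGraph {x : G | x ∉ H} S).Adj x y}
      = {y : ({x : G | x ∉ H} : Set G) | (linkGraph {x : G | x ∉ H} S).Adj x y ∧
          (x : G) - y ∈ (S ∪ -S) \ {0}} ∪
        {y : ({x : G | x ∉ H} : Set G) | (linkGraph {x : G | x ∉ H} S).Adj x y ∧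
          (x : G) - y ∉ (S ∪ -S) \ {0}} := by
    ext y
    simp only [Set.mem_setOf_eq, Set.mem_union]
    tauto
  have hdisj : Disjoint
      {y : ({x : G | x ∉ H} : Set G) | (linkGraph {x : G | x ∉ H} S).Adj x y ∧
          (x : G) - y ∈ (S ∪ -S) \ {0}}
      {y : ({x : G | x ∉ H} : Set G) | (linkGraph {x : G | x ∉ H} S).Adj x y ∧
          (x : G) - y ∉ (S ∪ -S) \ {0}} := by
    rw [Set.disjoint_left]
    rintro y ⟨-, h⟩ ⟨-, h'⟩
    exact h' h
  have hcard : {y : ({x : G | x ∉ H} : Set G) |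
        (linkGraph {x : G | x ∉ H} S).Adj x y}.ncard
      = {y : ({x : G | x ∉ H} : Set G) | (linkGraph {x : G | x ∉ H} S).Adj x y ∧
          (x : G) - y ∈ (S ∪ -S) \ {0}}.ncard +
        {y : ({x : G | x ∉ H} : Set G) | (linkGraph {x : G | x ∉ H} S).Adj x y ∧
          (x : G) - y ∉ (S ∪ -S) \ {0}}.ncard := by
    rw [hN, Set.ncard_union_eq hdisj (Set.toFinite _) (Set.toFinite _)]
  refine ⟨h1, h2, ?_, ?_⟩
  · rw [hcard, h1]; omega
  · rw [hcard, h1]; omega
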